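/- arXiv:1606.01835 — 2 statements merged into one kernel-verified Lean document; each statement's English description precedes it below -/
import Mathlib

section
/- Fix d ≥ 1, m ≥ 1, an integer k ≥ 1, n = km, and β > 0. If the i.i.d. environment variables have a finite exponential moment 𝔼[exp(β ω(1,0))] < ∞, then for every endpoint y ∈ ℤ^d the point-to-point polymer partition function is dominated by the point-to-point m-tree partition function in the Laplace transform order: for every λ ≥ 0, 𝔼[exp(−λ Z_n^pol(y))] ≥ 𝔼[exp(−λ Z_n^{m-tree}(y))]. -/
open MeasureTheory ProbabilityTheory Real Finset

noncomputable section

/-- A nearest-neighbour step of the simple random walk on `ℤ^d`, encoded by a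
coordinate direction and a sign. -/
def step (d : ℕ) (s : Fin d × Bool) : Fin d → ℤ :=
  fun j => if j = s.1 then (if s.2 then 1 else -1) else 0

/-- Position after `i` steps of the nearest-neighbour path (started at the origin)
with step sequence `s`.  Nearest-neighbour paths in `Π_n` (starting at `0`) are
identified with their step sequences `s : Fin n → Fin d × Bool`. -/
def pos {d n : ℕ} (s : Fin n → Fin d × Bool) (i : ℕ) : Fin d → ℤ :=
  ∑ j ∈ Finset.univ.filter (fun j : Fin n => (j : ℕ) < i), step d (s j)

/-- The polymer energy `H_n(x) = ∑_{i=1}^n ω(i, x_i)`. -/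
def polymerEnergy {Ω : Type*} {d : ℕ} (n : ℕ) (env : ℕ × (Fin d → ℤ) → Ω → ℝ)
    (s : Fin n → Fin d × Bool) (o : Ω) : ℝ :=
  ∑ i ∈ Finset.range n, env (i + 1, pos s (i + 1)) o

/-- The `(x_m, x_{2m}, …, x_{lm})` word indexing the environment block used by the
path `s` in the `l`-th block of the `m`-tree. -/
def treeWord {d n : ℕ} (m : ℕ) (s : Fin n → Fin d × Bool) (l : ℕ) : List (Fin d → ℤ) :=
  List.ofFn (fun r : Fin l => pos s ((r + 1) * m))

/-- The `m`-tree energy `H_n^{m-tree}(x)`, for `n = k m`: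
`∑_{l=0}^{k-1} ∑_{j=1}^{m} ω^{(x_m, …, x_{lm})}(j, x_{lm+j} − x_{lm})`. -/
def treeEnergy {Ω : Type*} {d : ℕ} (n m k : ℕ)
    (envT : List (Fin d → ℤ) × ℕ × (Fin d → ℤ) → Ω → ℝ)
    (s : Fin n → Fin d × Bool) (o : Ω) : ℝ :=
  ∑ l ∈ Finset.range k, ∑ j ∈ Finset.range m,
    envT (treeWord m s l, (j + 1, pos s (l * m + (j + 1)) - pos s (l * m))) o

/-- An i.i.d. family with common law `ν`: measurable, jointly independent,
identically distributed. -/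
def IID {Ω ι : Type*} [MeasurableSpace Ω] (μ : Measure Ω) (f : ι → Ω → ℝ) (ν : Measure ℝ) : Prop :=
  (∀ i, Measurable (f i)) ∧ iIndepFun f μ ∧ ∀ i, Measure.map (f i) μ = ν

/-- The point-to-point partition function
`Z_n^{pol}(y) = (2d)^{-n} ∑_{x ∈ Π_n, x_n = y} e^{β H_n(x)}`. -/
def ZpolPP {Ω : Type*} {d : ℕ} (n : ℕ) (β : ℝ) (env : ℕ × (Fin d → ℤ) → Ω → ℝ)
    (y : Fin d → ℤ) (o : Ω) : ℝ :=
  (2 * d : ℝ)⁻¹ ^ n *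
    ∑ s ∈ Finset.univ.filter (fun s : Fin n → Fin d × Bool => pos s n = y),
      Real.exp (β * polymerEnergy n env s o)

/-- The point-to-point `m`-tree partition function `Z_n^{m-tree}(y)`. -/
def ZtreePP {Ω : Type*} {d : ℕ} (n m k : ℕ) (β : ℝ)
    (envT : List (Fin d → ℤ) × ℕ × (Fin d → ℤ) → Ω → ℝ) (y : Fin d → ℤ) (o : Ω) : ℝ :=
  (2 * d : ℝ)⁻¹ ^ n *
    ∑ s ∈ Finset.univ.filter (fun s : Fin n → Fin d × Bool => pos s n = y),
      Real.exp (β * treeEnergy n m k envT s o)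

/-- Bounded in `[0,1]`. -/
def Bdd01 {α : Type*} (f : α → ℝ) : Prop := ∀ x, 0 ≤ f x ∧ f x ≤ 1

lemma Bdd01.integrable {α : Type*} [MeasurableSpace α] {μ : Measure α} [IsProbabilityMeasure μ]
    {f : α → ℝ} (hm : Measurable f) (hb : Bdd01 f) : Integrable f μ := by
  refine Integrable.mono' (integrable_const 1) hm.aestronglyMeasurable ?_
  filter_upwards with x
  rw [Real.norm_eq_abs, abs_le]
  exact ⟨by linarith [(hb x).1], (hb x).2⟩

lemma Bdd01.integral_nonneg {α : Type*} [MeasurableSpace α] {μ : Measure α}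
    {f : α → ℝ} (hb : Bdd01 f) : 0 ≤ ∫ x, f x ∂μ :=
  MeasureTheory.integral_nonneg fun x => (hb x).1

lemma Bdd01.integral_le_one {α : Type*} [MeasurableSpace α] {μ : Measure α}
    [IsProbabilityMeasure μ] {f : α → ℝ} (hm : Measurable f) (hb : Bdd01 f) :
    ∫ x, f x ∂μ ≤ 1 := by
  calc ∫ x, f x ∂μ ≤ ∫ _x, (1 : ℝ) ∂μ :=
        integral_mono (hb.integrable hm) (integrable_const 1) fun x => (hb x).2
    _ = 1 := by simp

/-- Harris property: positive correlation of pairs of bounded antitone functions. -/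
def HarrisM {α : Type*} [MeasurableSpace α] [Preorder α] (μ : Measure α) : Prop :=
  ∀ f g : α → ℝ, Measurable f → Measurable g → Antitone f → Antitone g →
    Bdd01 f → Bdd01 g → (∫ x, f x ∂μ) * ∫ x, g x ∂μ ≤ ∫ x, f x * g x ∂μ

lemma harris_real (ν : Measure ℝ) [IsProbabilityMeasure ν] : HarrisM ν := by
  intro f g hfm hgm hfa hga hfb hgb
  have hfi : Integrable f ν := hfb.integrable hfm
  have hgi : Integrable g ν := hgb.integrable hgm
  have hfgi : Integrable (fun x => f x * g x) ν := by
    refine (Bdd01.integrable (hfm.mul hgm) ?_)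
    exact fun x => ⟨mul_nonneg (hfb x).1 (hgb x).1,
      mul_le_one₀ (hfb x).2 (hgb x).1 (hgb x).2⟩
  have pointwise : ∀ y x : ℝ, (0:ℝ) ≤ (f x - f y) * (g x - g y) := by
    intro y x
    rcases le_total x y with h | h
    · exact mul_nonneg (by linarith [hfa h]) (by linarith [hga h])
    · have h2 := mul_nonneg (sub_nonneg.2 (hfa h)) (sub_nonneg.2 (hga h))
      nlinarith [h2]
  have key : 0 ≤ ∫ y, ∫ x, (f x - f y) * (g x - g y) ∂ν ∂ν :=
    MeasureTheory.integral_nonneg fun y => MeasureTheory.integral_nonneg fun x => pointwise y x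
  have expand : ∀ y, ∫ x, (f x - f y) * (g x - g y) ∂ν
      = (∫ x, f x * g x ∂ν) - g y * ∫ x, f x ∂ν - f y * ∫ x, g x ∂ν + f y * g y := by
    intro y
    have h1 : (fun x => (f x - f y) * (g x - g y))
        = fun x => f x * g x - g y * f x - f y * g x + f y * g y := by
      funext x; ring
    rw [h1]
    rw [integral_add, integral_sub, integral_sub, integral_const_mul, integral_const_mul,
      integral_const]
    · simp
    · exact hfgi
    · exact hfi.const_mul _
    · exact (hfgi.sub (hfi.const_mul _))
    · exact hgi.const_mul _
    · exact ((hfgi.sub (hfi.const_mul _)).sub (hgi.const_mul _))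
    · exact integrable_const _
  rw [MeasureTheory.integral_congr_ae (Filter.Eventually.of_forall expand)] at key
  rw [integral_add, integral_sub, integral_sub, integral_const, integral_mul_const,
    integral_mul_const] at key
  · simp only [measure_univ, probReal_univ, ENNReal.toReal_one, smul_eq_mul, one_mul] at key
    nlinarith [key]
  · exact integrable_const _
  · exact hgi.mul_const _
  · exact (integrable_const _).sub (hgi.mul_const _)
  · exact hfi.mul_const _
  · exact ((integrable_const _).sub (hgi.mul_const _)).sub (hfi.mul_const _)
  · exact hfgi

lemma harris_prod {α β : Type*} [MeasurableSpace α] [MeasurableSpace β] [Preorder α] [Preorder β]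
    (μα : Measure α) (μβ : Measure β) [IsProbabilityMeasure μα] [IsProbabilityMeasure μβ]
    (hα : HarrisM μα) (hβ : HarrisM μβ) : HarrisM (μα.prod μβ) := by
  intro f g hfm hgm hfa hga hfb hgb
  set F : α → ℝ := fun a => ∫ b, f (a, b) ∂μβ with hF
  set G : α → ℝ := fun a => ∫ b, g (a, b) ∂μβ with hG
  have hFm : Measurable F := (hfm.stronglyMeasurable.integral_prod_right').measurable
  have hGm : Measurable G := (hgm.stronglyMeasurable.integral_prod_right').measurable
  have secb : ∀ (h : α × β → ℝ), Bdd01 h → ∀ a, Bdd01 (fun b => h (a, b)) :=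
    fun h hb a b => hb (a, b)
  have secm : ∀ (h : α × β → ℝ), Measurable h → ∀ a, Measurable (fun b => h (a, b)) :=
    fun h hm a => hm.comp (measurable_prodMk_left)
  have seca : ∀ (h : α × β → ℝ), Antitone h → ∀ a, Antitone (fun b => h (a, b)) :=
    fun h ha a b b' hb => ha (Prod.mk_le_mk.2 ⟨le_refl a, hb⟩)
  have hFb : Bdd01 F := fun a => ⟨(secb f hfb a).integral_nonneg,
    Bdd01.integral_le_one (secm f hfm a) (secb f hfb a)⟩
  have hGb : Bdd01 G := fun a => ⟨(secb g hgb a).integral_nonneg,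
    Bdd01.integral_le_one (secm g hgm a) (secb g hgb a)⟩
  have hFa : Antitone F := by
    intro a a' ha
    exact integral_mono ((secb f hfb a').integrable (secm f hfm a'))
      ((secb f hfb a).integrable (secm f hfm a))
      (fun b => hfa (Prod.mk_le_mk.2 ⟨ha, le_refl b⟩))
  have hGa : Antitone G := by
    intro a a' ha
    exact integral_mono ((secb g hgb a').integrable (secm g hgm a'))
      ((secb g hgb a).integrable (secm g hgm a))
      (fun b => hga (Prod.mk_le_mk.2 ⟨ha, le_refl b⟩))
  have hfgb : Bdd01 (fun p => f p * g p) := fun p => ⟨mul_nonneg (hfb p).1 (hgb p).1,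
    mul_le_one₀ (hfb p).2 (hgb p).1 (hgb p).2⟩
  have h1 : ∫ p, f p * g p ∂(μα.prod μβ) = ∫ a, ∫ b, f (a, b) * g (a, b) ∂μβ ∂μα :=
    integral_prod _ (hfgb.integrable (hfm.mul hgm))
  have h2 : ∫ p, f p ∂(μα.prod μβ) = ∫ a, F a ∂μα := integral_prod _ (hfb.integrable hfm)
  have h3 : ∫ p, g p ∂(μα.prod μβ) = ∫ a, G a ∂μα := integral_prod _ (hgb.integrable hgm)
  rw [h1, h2, h3]
  have step1 : ∫ a, F a * G a ∂μα ≤ ∫ a, ∫ b, f (a, b) * g (a, b) ∂μβ ∂μα := by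
    refine integral_mono ?_ ?_ ?_
    · exact (Bdd01.integrable (hFm.mul hGm) (fun a => ⟨mul_nonneg (hFb a).1 (hGb a).1,
        mul_le_one₀ (hFb a).2 (hGb a).1 (hGb a).2⟩))
    · refine Bdd01.integrable ?_ ?_
      · exact ((hfm.mul hgm).stronglyMeasurable.integral_prod_right').measurable
      · intro a
        constructor
        · exact (secb _ hfgb a).integral_nonneg
        · exact Bdd01.integral_le_one (secm _ (hfm.mul hgm) a) (secb _ hfgb a)
    · intro a
      exact hβ _ _ (secm f hfm a) (secm g hgm a) (seca f hfa a) (seca g hga a)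
        (secb f hfb a) (secb g hgb a)
  exact le_trans (hα F G hFm hGm hFa hGa hFb hGb) step1

lemma harris_transfer {α β : Type*} [MeasurableSpace α] [MeasurableSpace β] [Preorder α]
    [Preorder β] {μα : Measure α} {μβ : Measure β} (e : α ≃ᵐ β)
    (hmp : MeasurePreserving e μα μβ) (hmono : Monotone e) (h : HarrisM μα) : HarrisM μβ := by
  intro f g hfm hgm hfa hga hfb hgb
  have key := h (f ∘ e) (g ∘ e) (hfm.comp e.measurable) (hgm.comp e.measurable)
    (hfa.comp_monotone hmono) (hga.comp_monotone hmono) (fun x => hfb (e x)) (fun x => hgb (e x))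
  have e1 : ∫ x, (f ∘ e) x ∂μα = ∫ y, f y ∂μβ := hmp.integral_comp e.measurableEmbedding f
  have e2 : ∫ x, (g ∘ e) x ∂μα = ∫ y, g y ∂μβ := hmp.integral_comp e.measurableEmbedding g
  have e3 : ∫ x, (f ∘ e) x * (g ∘ e) x ∂μα = ∫ y, f y * g y ∂μβ :=
    hmp.integral_comp e.measurableEmbedding (fun y => f y * g y)
  rw [e1, e2, e3] at key
  exact key

lemma harris_pi_fin (ν : Measure ℝ) [IsProbabilityMeasure ν] :
    ∀ n : ℕ, HarrisM (Measure.pi (fun _ : Fin n => ν)) := by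
  intro n
  induction n with
  | zero =>
    intro f g hfm hgm hfa hga hfb hgb
    have hfc : f = fun _ => f default := by funext x; rw [Subsingleton.elim x default]
    have hgc : g = fun _ => g default := by funext x; rw [Subsingleton.elim x default]
    rw [hfc, hgc]
    simp [integral_const]
  | succ n ih =>
    have hprod : HarrisM (ν.prod (Measure.pi (fun _ : Fin n => ν))) :=
      harris_prod _ _ (harris_real ν) ih
    refine harris_transfer (MeasurableEquiv.piFinSuccAbove (fun _ : Fin (n+1) => ℝ) 0).symm
      (measurePreserving_piFinSuccAbove (fun _ : Fin (n+1) => ν) 0).symm ?_ hprod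
    intro p q hpq
    have : ∀ (r : ℝ × (Fin n → ℝ)),
        (MeasurableEquiv.piFinSuccAbove (fun _ : Fin (n+1) => ℝ) 0).symm r
          = (0 : Fin (n+1)).insertNth r.1 r.2 := fun r => rfl
    rw [this p, this q]
    intro j
    refine Fin.succAboveCases 0 ?_ ?_ j
    · simpa using hpq.1
    · intro i
      simpa using hpq.2 i

lemma harris_pi {ι : Type*} [Fintype ι] (ν : Measure ℝ) [IsProbabilityMeasure ν] :
    HarrisM (Measure.pi (fun _ : ι => ν)) := by
  classical
  refine harris_transfer (MeasurableEquiv.piCongrLeft (fun _ : ι => ℝ) (Fintype.equivFin ι).symm)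
    (measurePreserving_piCongrLeft (fun _ : ι => ν) (Fintype.equivFin ι).symm) ?_
    (harris_pi_fin ν (Fintype.card ι))
  intro p q hpq
  intro j
  have hj : j = (Fintype.equivFin ι).symm ((Fintype.equivFin ι) j) :=
    (Equiv.symm_apply_apply _ _).symm
  rw [hj, MeasurableEquiv.piCongrLeft_apply_apply, MeasurableEquiv.piCongrLeft_apply_apply]
  exact hpq _

lemma harris_finset_prod {α γ : Type*} [MeasurableSpace α] [Preorder α] {μ : Measure α}
    [IsProbabilityMeasure μ] (hH : HarrisM μ) (P : Finset γ) (f : γ → α → ℝ)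
    (hm : ∀ z ∈ P, Measurable (f z)) (ha : ∀ z ∈ P, Antitone (f z))
    (hb : ∀ z ∈ P, Bdd01 (f z)) :
    ∏ z ∈ P, ∫ x, f z x ∂μ ≤ ∫ x, ∏ z ∈ P, f z x ∂μ := by
  classical
  induction P using Finset.cons_induction with
  | empty => simp
  | cons z P hz ih =>
    have hmP : Measurable (fun x => ∏ z' ∈ P, f z' x) :=
      Finset.measurable_prod P (fun z' hz' => hm z' (Finset.mem_cons_of_mem hz'))
    have haP : Antitone (fun x => ∏ z' ∈ P, f z' x) := by
      intro x x' hx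
      refine Finset.prod_le_prod ?_ ?_
      · exact fun z' hz' => (hb z' (Finset.mem_cons_of_mem hz') x').1
      · exact fun z' hz' => (ha z' (Finset.mem_cons_of_mem hz')) hx
    have hbP : Bdd01 (fun x => ∏ z' ∈ P, f z' x) := by
      intro x
      constructor
      · exact Finset.prod_nonneg fun z' hz' => (hb z' (Finset.mem_cons_of_mem hz') x).1
      · exact Finset.prod_le_one (fun z' hz' => (hb z' (Finset.mem_cons_of_mem hz') x).1)
          (fun z' hz' => (hb z' (Finset.mem_cons_of_mem hz') x).2)
    rw [Finset.prod_cons]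
    have ihP := ih (fun z' hz' => hm z' (Finset.mem_cons_of_mem hz'))
      (fun z' hz' => ha z' (Finset.mem_cons_of_mem hz'))
      (fun z' hz' => hb z' (Finset.mem_cons_of_mem hz'))
    have step1 : (∫ x, f z x ∂μ) * ∏ z' ∈ P, ∫ x, f z' x ∂μ
        ≤ (∫ x, f z x ∂μ) * ∫ x, ∏ z' ∈ P, f z' x ∂μ :=
      mul_le_mul_of_nonneg_left ihP ((hb z (Finset.mem_cons_self z P)).integral_nonneg)
    have step2 := hH (f z) (fun x => ∏ z' ∈ P, f z' x) (hm z (Finset.mem_cons_self z P)) hmP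
      (ha z (Finset.mem_cons_self z P)) haP (hb z (Finset.mem_cons_self z P)) hbP
    calc (∫ x, f z x ∂μ) * ∏ z' ∈ P, ∫ x, f z' x ∂μ
        ≤ (∫ x, f z x ∂μ) * ∫ x, ∏ z' ∈ P, f z' x ∂μ := step1
      _ ≤ ∫ x, f z x * ∏ z' ∈ P, f z' x ∂μ := step2
      _ = ∫ x, ∏ z' ∈ Finset.cons z P hz, f z' x ∂μ := by
          refine integral_congr_ae (Filter.Eventually.of_forall fun x => ?_)
          simp only [Finset.prod_cons]


section IIDstuff

variable {Ω : Type*} [MeasurableSpace Ω] {μ : Measure Ω} {ν : Measure ℝ}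

lemma iIndepFun_precomp {ιJ ιI : Type*} {X : ιJ → Ω → ℝ}
    (h : iIndepFun X μ) (u : ιI → ιJ) (hu : Function.Injective u) :
    iIndepFun (fun i => X (u i)) μ := by
  classical
  rw [iIndepFun_iff_measure_inter_preimage_eq_mul] at h ⊢
  intro S sets hsets
  have hex : ∀ i : ιI, ∃ i', u i' = u i := fun i => ⟨i, rfl⟩
  set sets' : ιJ → Set ℝ := fun j => if hj : ∃ i, u i = j then sets hj.choose else Set.univ
    with hsets'def
  have hkey : ∀ i : ιI, sets' (u i) = sets i := by
    intro i
    rw [hsets'def]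
    simp only [dif_pos (hex i)]
    exact congrArg sets (hu (hex i).choose_spec)
  have h1 : (⋂ i ∈ S, X (u i) ⁻¹' sets i) = ⋂ j ∈ S.image u, X j ⁻¹' sets' j := by
    ext o
    simp only [Set.mem_iInter, Finset.mem_image, Set.mem_preimage]
    constructor
    · rintro H j ⟨i, hi, rfl⟩
      rw [hkey]
      exact H i hi
    · intro H i hi
      have := H (u i) ⟨i, hi, rfl⟩
      rwa [hkey] at this
  have hmeas' : ∀ j ∈ S.image u, MeasurableSet (sets' j) := by
    intro j hj
    obtain ⟨i, hi, rfl⟩ := Finset.mem_image.1 hj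
    rw [hkey]
    exact hsets i hi
  rw [h1, h (S.image u) hmeas', Finset.prod_image ?inj]
  case inj => exact fun i _ i' _ hii' => hu hii'
  exact Finset.prod_congr rfl fun i _ => by rw [hkey]

lemma IID.precomp {ιJ ιI : Type*} {X : ιJ → Ω → ℝ} (h : IID μ X ν) (u : ιI → ιJ)
    (hu : Function.Injective u) : IID μ (fun i => X (u i)) ν :=
  ⟨fun i => h.1 (u i), iIndepFun_precomp h.2.1 u hu, fun i => h.2.2 (u i)⟩

lemma iid_map_pi {ι : Type*} [Fintype ι] [IsProbabilityMeasure ν] {X : ι → Ω → ℝ}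
    (h : IID μ X ν) :
    Measure.map (fun o (i : ι) => X i o) μ = Measure.pi (fun _ : ι => ν) := by
  refine (Measure.pi_eq fun s hs => ?_).symm
  rw [Measure.map_apply (measurable_pi_lambda _ fun i => h.1 i) (MeasurableSet.univ_pi hs)]
  have hpre : (fun o (i : ι) => X i o) ⁻¹' (Set.pi Set.univ s) = ⋂ i ∈ Finset.univ, X i ⁻¹' s i := by
    ext o
    simp [Set.mem_pi]
  rw [hpre, (iIndepFun_iff_measure_inter_preimage_eq_mul.1 h.2.1) Finset.univ (fun i _ => hs i)]
  refine Finset.prod_congr rfl fun i _ => ?_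
  rw [← h.2.2 i, Measure.map_apply (h.1 i) (hs i)]

/-- Tuple of a subfamily indexed by a finset. -/
def tup {J : Type*} (X : J → Ω → ℝ) (S : Finset J) (o : Ω) : ↥S → ℝ := fun i => X i.1 o

lemma tup_measurable {J : Type*} {X : J → Ω → ℝ} (hm : ∀ j, Measurable (X j)) (S : Finset J) :
    Measurable (tup X S) :=
  measurable_pi_lambda _ fun i => hm i.1

lemma map_tup {J : Type*} [IsProbabilityMeasure ν] {X : J → Ω → ℝ} (h : IID μ X ν) (S : Finset J) :
    Measure.map (tup X S) μ = Measure.pi (fun _ : ↥S => ν) :=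
  iid_map_pi (h.precomp (Subtype.val : ↥S → J) Subtype.val_injective)

lemma integral_tup {J : Type*} [IsProbabilityMeasure ν] {X : J → Ω → ℝ} (h : IID μ X ν)
    (S : Finset J) {F : (↥S → ℝ) → ℝ} (hF : Measurable F) :
    ∫ x, F x ∂(Measure.pi (fun _ : ↥S => ν)) = ∫ o, F (tup X S o) ∂μ := by
  rw [← map_tup h S, integral_map (tup_measurable h.1 S).aemeasurable hF.aestronglyMeasurable]

lemma map_tup_prod {J : Type*} [IsProbabilityMeasure ν] [IsProbabilityMeasure μ]
    {X : J → Ω → ℝ} (h : IID μ X ν) (S T : Finset J) (hST : Disjoint S T) :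
    Measure.map (fun o => (tup X S o, tup X T o)) μ
      = (Measure.pi (fun _ : ↥S => ν)).prod (Measure.pi (fun _ : ↥T => ν)) := by
  have hind : IndepFun (tup X S) (tup X T) μ := h.2.1.indepFun_finset S T hST h.1
  rw [(indepFun_iff_map_prod_eq_prod_map_map (tup_measurable h.1 S).aemeasurable
    (tup_measurable h.1 T).aemeasurable).1 hind, map_tup h, map_tup h]

lemma integral_tup_prod {J : Type*} [IsProbabilityMeasure ν] [IsProbabilityMeasure μ]
    {X : J → Ω → ℝ} (h : IID μ X ν) (S T : Finset J) (hST : Disjoint S T)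
    {F : ((↥S → ℝ) × (↥T → ℝ)) → ℝ} (hF : Measurable F) :
    ∫ p, F p ∂((Measure.pi (fun _ : ↥S => ν)).prod (Measure.pi (fun _ : ↥T => ν)))
      = ∫ o, F (tup X S o, tup X T o) ∂μ := by
  rw [← map_tup_prod h S T hST,
    integral_map ((tup_measurable h.1 S).prodMk (tup_measurable h.1 T)).aemeasurable
      hF.aestronglyMeasurable]


/-- Expectation of a product of random variables that are functions of disjoint
sub-families of an independent family factorizes. -/
lemma integral_finset_prod_of_disjoint {J γ : Type*} {X : J → Ω → ℝ}
    [IsProbabilityMeasure μ]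
    (h : IID μ X ν) (P : Finset γ) (T : γ → Finset J)
    (hdisj : ∀ z ∈ P, ∀ z' ∈ P, z ≠ z' → Disjoint (T z) (T z'))
    (W : γ → Ω → ℝ)
    (hW : ∀ z ∈ P, ∃ φ : (↥(T z) → ℝ) → ℝ, Measurable φ ∧ ∀ o, W z o = φ (tup X (T z) o))
    (hbdd : ∀ z ∈ P, Bdd01 (W z)) :
    ∫ o, ∏ z ∈ P, W z o ∂μ = ∏ z ∈ P, ∫ o, W z o ∂μ := by
  classical
  induction P using Finset.cons_induction with
  | empty => simp
  | cons z P hz ih =>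
    have hWm : ∀ z' ∈ Finset.cons z P hz, Measurable (W z') := by
      intro z' hz'
      obtain ⟨φ, hφm, hφ⟩ := hW z' hz'
      have : W z' = fun o => φ (tup X (T z') o) := funext hφ
      rw [this]
      exact hφm.comp (tup_measurable h.1 _)
    -- big tuple
    set B : Finset J := P.biUnion T with hB
    have hsub : ∀ z' ∈ P, T z' ⊆ B := fun z' hz' => Finset.subset_biUnion_of_mem T hz'
    -- express the product over P as a function of the big tuple
    set ψ : (↥B → ℝ) → ℝ := fun x => ∏ z' ∈ P.attach,
      (hW z'.1 (Finset.mem_cons_of_mem z'.2)).choose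
        (fun i => x ⟨i.1, hsub z'.1 z'.2 i.2⟩) with hψ
    have hψm : Measurable ψ := by
      refine Finset.measurable_prod _ fun z' _ => ?_
      exact (hW z'.1 (Finset.mem_cons_of_mem z'.2)).choose_spec.1.comp
        (measurable_pi_lambda _ fun i => measurable_pi_apply _)
    have hψeq : ∀ o, (∏ z' ∈ P, W z' o) = ψ (tup X B o) := by
      intro o
      rw [← Finset.prod_attach P (fun z' => W z' o), hψ]
      refine Finset.prod_congr rfl fun z' _ => ?_
      rw [(hW z'.1 (Finset.mem_cons_of_mem z'.2)).choose_spec.2 o]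
      rfl
    obtain ⟨φ, hφm, hφ⟩ := hW z (Finset.mem_cons_self z P)
    have hTdisj : Disjoint (T z) B := by
      rw [hB, Finset.disjoint_biUnion_right]
      intro z' hz'
      exact hdisj z (Finset.mem_cons_self z P) z' (Finset.mem_cons_of_mem hz')
        (fun hzz' => hz (hzz' ▸ hz'))
    have hind0 : IndepFun (tup X (T z)) (tup X B) μ := h.2.1.indepFun_finset _ _ hTdisj h.1
    have hind : IndepFun (W z) (fun o => ∏ z' ∈ P, W z' o) μ := by
      have : W z = φ ∘ tup X (T z) := funext hφ
      have h2 : (fun o => ∏ z' ∈ P, W z' o) = ψ ∘ tup X B := funext hψeq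
      rw [this, h2]
      exact hind0.comp hφm hψm
    have hbP : Bdd01 (fun o => ∏ z' ∈ P, W z' o) := by
      intro o
      constructor
      · exact Finset.prod_nonneg fun z' hz' => (hbdd z' (Finset.mem_cons_of_mem hz') o).1
      · exact Finset.prod_le_one (fun z' hz' => (hbdd z' (Finset.mem_cons_of_mem hz') o).1)
          (fun z' hz' => (hbdd z' (Finset.mem_cons_of_mem hz') o).2)
    have hint1 : Integrable (W z) μ :=
      Bdd01.integrable (hWm z (Finset.mem_cons_self z P)) (hbdd z (Finset.mem_cons_self z P))
    have hint2 : Integrable (fun o => ∏ z' ∈ P, W z' o) μ :=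
      Bdd01.integrable (Finset.measurable_prod _ fun z' hz' => hWm z' (Finset.mem_cons_of_mem hz'))
        hbP
    have hmul := IndepFun.integral_mul_eq_mul_integral hind hint1.1 hint2.1
    have ihP := ih (fun z1 hz1 z2 hz2 hne => hdisj z1 (Finset.mem_cons_of_mem hz1) z2
        (Finset.mem_cons_of_mem hz2) hne)
      (fun z' hz' => hW z' (Finset.mem_cons_of_mem hz'))
      (fun z' hz' => hbdd z' (Finset.mem_cons_of_mem hz'))
    calc ∫ o, ∏ z' ∈ Finset.cons z P hz, W z' o ∂μ
        = ∫ o, W z o * ∏ z' ∈ P, W z' o ∂μ := by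
          refine integral_congr_ae (Filter.Eventually.of_forall fun o => ?_)
          simp only [Finset.prod_cons]
      _ = (∫ o, W z o ∂μ) * ∫ o, ∏ z' ∈ P, W z' o ∂μ := hmul
      _ = ∏ z' ∈ Finset.cons z P hz, ∫ o, W z' o ∂μ := by
          rw [Finset.prod_cons, ihP]


end IIDstuff

section Paths

variable {d : ℕ}

lemma pos_eq_sum_ite {n : ℕ} (s : Fin n → Fin d × Bool) (i : ℕ) :
    pos s i = ∑ j : Fin n, if (j : ℕ) < i then step d (s j) else 0 :=
  Finset.sum_filter _ _

lemma pos_zero {n : ℕ} (s : Fin n → Fin d × Bool) : pos s 0 = 0 := by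
  rw [pos]
  convert Finset.sum_empty
  rw [Finset.filter_eq_empty_iff]
  intro j _
  omega

lemma pos_append_left {p q : ℕ} (a : Fin p → Fin d × Bool) (b : Fin q → Fin d × Bool)
    {i : ℕ} (hi : i ≤ p) : pos (Fin.append a b) i = pos a i := by
  rw [pos_eq_sum_ite, pos_eq_sum_ite, Fin.sum_univ_add]
  have h2 : ∀ j : Fin q,
      (if ((Fin.natAdd p j : Fin (p + q)) : ℕ) < i then step d (Fin.append a b (Fin.natAdd p j))
        else 0) = 0 := by
    intro j
    rw [if_neg]
    rw [Fin.coe_natAdd]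
    omega
  rw [Finset.sum_congr rfl fun j _ => h2 j, Finset.sum_const, smul_zero, add_zero]
  refine Finset.sum_congr rfl fun j _ => ?_
  rw [Fin.append_left, Fin.coe_castAdd]

lemma pos_append_right {p q : ℕ} (a : Fin p → Fin d × Bool) (b : Fin q → Fin d × Bool)
    (i : ℕ) : pos (Fin.append a b) (p + i) = pos a p + pos b i := by
  rw [pos_eq_sum_ite, Fin.sum_univ_add]
  congr 1
  · rw [pos_eq_sum_ite]
    refine Finset.sum_congr rfl fun j _ => ?_
    rw [Fin.append_left, Fin.coe_castAdd, if_pos (by omega), if_pos (by omega : (j:ℕ) < p)]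
  · rw [pos_eq_sum_ite]
    refine Finset.sum_congr rfl fun j _ => ?_
    rw [Fin.append_right, Fin.coe_natAdd]
    congr 1
    simp only [eq_iff_iff]
    omega

lemma append_left_right {p q : ℕ} (s : Fin (p + q) → Fin d × Bool) :
    Fin.append (fun i => s (Fin.castAdd q i)) (fun i => s (Fin.natAdd p i)) = s := by
  refine funext fun j => ?_
  refine Fin.addCases ?_ ?_ j
  · intro i; rw [Fin.append_left]
  · intro i; rw [Fin.append_right]

/-- Splitting a path into its first `p` and last `q` steps. -/
def pathEquiv (d p q : ℕ) : ((Fin p → Fin d × Bool) × (Fin q → Fin d × Bool))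
    ≃ (Fin (p + q) → Fin d × Bool) where
  toFun ab := Fin.append ab.1 ab.2
  invFun s := (fun i => s (Fin.castAdd q i), fun i => s (Fin.natAdd p i))
  left_inv ab := by
    refine Prod.ext ?_ ?_
    · funext i
      exact congrFun (congrArg _ rfl) i |>.trans (Fin.append_left ab.1 ab.2 i)
    · funext i
      exact congrFun (congrArg _ rfl) i |>.trans (Fin.append_right ab.1 ab.2 i)
  right_inv s := append_left_right s

lemma sum_split_paths {p q : ℕ} (F : (Fin (p + q) → Fin d × Bool) → ℝ) :
    ∑ s, F s = ∑ a : Fin p → Fin d × Bool, ∑ b : Fin q → Fin d × Bool, F (Fin.append a b) := by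
  rw [← Equiv.sum_comp (pathEquiv d p q) F, Fintype.sum_prod_type]
  rfl

lemma sum_split_filter {p q : ℕ} (y : Fin d → ℤ) (F : (Fin p → Fin d × Bool) → ℝ)
    (G : (Fin d → ℤ) → (Fin q → Fin d × Bool) → ℝ) :
    ∑ s ∈ Finset.univ.filter (fun s : Fin (p + q) → Fin d × Bool => pos s (p + q) = y),
        (F (fun i => s (Fin.castAdd q i)) * G (pos (fun i => s (Fin.castAdd q i)) p)
          (fun i => s (Fin.natAdd p i)))
      = ∑ z ∈ Finset.univ.image (fun a : Fin p → Fin d × Bool => pos a p),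
          (∑ a ∈ Finset.univ.filter (fun a : Fin p → Fin d × Bool => pos a p = z), F a) *
          (∑ b ∈ Finset.univ.filter (fun b : Fin q → Fin d × Bool => pos b q = y - z), G z b) := by
  classical
  rw [Finset.sum_filter, sum_split_paths]
  have hab : ∀ (a : Fin p → Fin d × Bool) (b : Fin q → Fin d × Bool),
      (if pos (Fin.append a b) (p + q) = y then
          F (fun i => Fin.append a b (Fin.castAdd q i)) *
            G (pos (fun i => Fin.append a b (Fin.castAdd q i)) p)
            (fun i => Fin.append a b (Fin.natAdd p i))
        else 0)
      = if pos b q = y - pos a p then F a * G (pos a p) b else 0 := by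
    intro a b
    have h1 : (fun i => Fin.append a b (Fin.castAdd q i)) = a := by
      funext i; rw [Fin.append_left]
    have h2 : (fun i => Fin.append a b (Fin.natAdd p i)) = b := by
      funext i; rw [Fin.append_right]
    have h3 : pos (Fin.append a b) (p + q) = pos a p + pos b q := pos_append_right a b q
    rw [h1, h2, h3]
    congr 1
    simp only [eq_iff_iff]
    constructor
    · intro h; rw [← h]; abel
    · intro h; rw [h]; abel
  simp only [hab]
  have hsum : ∀ a : Fin p → Fin d × Bool,
      (∑ b : Fin q → Fin d × Bool, if pos b q = y - pos a p then F a * G (pos a p) b else 0)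
      = F a * ∑ b ∈ Finset.univ.filter
          (fun b : Fin q → Fin d × Bool => pos b q = y - pos a p), G (pos a p) b := by
    intro a
    rw [Finset.mul_sum, Finset.sum_filter]
  simp only [hsum]
  rw [← Finset.sum_fiberwise_of_maps_to (g := fun a : Fin p → Fin d × Bool => pos a p)
    (t := Finset.univ.image (fun a : Fin p → Fin d × Bool => pos a p))
    (fun a _ => Finset.mem_image_of_mem _ (Finset.mem_univ a))]
  refine Finset.sum_congr rfl fun z _ => ?_
  rw [Finset.sum_mul]
  refine Finset.sum_congr rfl fun a ha => ?_
  rw [Finset.mem_filter] at ha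
  rw [ha.2]

end Paths

section Energies

variable {Ω : Type*} {d : ℕ}

lemma polymerEnergy_append {p q : ℕ} (env : ℕ × (Fin d → ℤ) → Ω → ℝ)
    (a : Fin p → Fin d × Bool) (b : Fin q → Fin d × Bool) (o : Ω) :
    polymerEnergy (p + q) env (Fin.append a b) o
      = polymerEnergy p env a o
        + polymerEnergy q (fun e => env (p + e.1, pos a p + e.2)) b o := by
  rw [polymerEnergy, Finset.sum_range_add]
  congr 1
  · refine Finset.sum_congr rfl fun i hi => ?_
    rw [Finset.mem_range] at hi
    rw [pos_append_left a b (by omega : i + 1 ≤ p)]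
  · rw [polymerEnergy]
    refine Finset.sum_congr rfl fun i hi => ?_
    have h1 : p + i + 1 = p + (i + 1) := by omega
    rw [h1, pos_append_right a b (i + 1)]

lemma treeWord_zero {n : ℕ} (m : ℕ) (s : Fin n → Fin d × Bool) : treeWord m s 0 = [] := by
  rw [treeWord, List.ofFn_zero]

lemma treeWord_append {q : ℕ} {m : ℕ} (a : Fin m → Fin d × Bool) (b : Fin q → Fin d × Bool)
    (l : ℕ) :
    treeWord m (Fin.append a b) (l + 1)
      = pos a m :: (treeWord m b l).map (pos a m + ·) := by
  rw [treeWord, List.ofFn_succ]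
  congr 1
  · have h0 : ((0 : Fin (l + 1)) + 1 : ℕ) * m = m + 0 := by simp
    rw [h0, pos_append_right a b 0, pos_zero, add_zero]
  · rw [treeWord, List.map_ofFn]
    refine congrArg _ (funext fun r => ?_)
    have h1 : ((Fin.succ r : Fin (l + 1)) + 1 : ℕ) * m = m + ((r : ℕ) + 1) * m := by
      rw [Fin.val_succ]; ring
    rw [Function.comp_apply, h1, pos_append_right a b (((r : ℕ) + 1) * m)]

lemma treeEnergy_append {q : ℕ} {m : ℕ} (k : ℕ)
    (envT : List (Fin d → ℤ) × ℕ × (Fin d → ℤ) → Ω → ℝ)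
    (a : Fin m → Fin d × Bool) (b : Fin q → Fin d × Bool) (o : Ω) :
    treeEnergy (m + q) m (k + 1) envT (Fin.append a b) o
      = polymerEnergy m (fun e => envT ([], e)) a o
        + treeEnergy q m k (fun e => envT (pos a m :: e.1.map (pos a m + ·), e.2)) b o := by
  rw [treeEnergy, Finset.sum_range_succ', add_comm]
  congr 1
  · -- l = 0 term
    rw [polymerEnergy]
    refine Finset.sum_congr rfl fun j hj => ?_
    rw [Finset.mem_range] at hj
    rw [treeWord_zero]
    have h0 : 0 * m + (j + 1) = j + 1 := by omega
    have h0' : 0 * m = 0 := by omega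
    rw [h0, h0', pos_zero, sub_zero, pos_append_left a b (by omega : j + 1 ≤ m)]
  · -- l ≥ 1 terms
    rw [treeEnergy]
    refine Finset.sum_congr rfl fun l hl => ?_
    refine Finset.sum_congr rfl fun j hj => ?_
    rw [treeWord_append a b l]
    have h1 : (l + 1) * m + (j + 1) = m + (l * m + (j + 1)) := by ring
    have h2 : (l + 1) * m = m + l * m := by ring
    rw [h1, h2, pos_append_right a b (l * m + (j + 1)), pos_append_right a b (l * m),
      add_sub_add_left_eq_sub]

end Energies

section KeyIdentities

variable {Ω : Type*} {d : ℕ}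

lemma key_pol (m k : ℕ) (β : ℝ) (env : ℕ × (Fin d → ℤ) → Ω → ℝ) (y : Fin d → ℤ) (o : Ω) :
    ZpolPP (m + k * m) β env y o
      = ∑ z ∈ Finset.univ.image (fun a : Fin m → Fin d × Bool => pos a m),
          ZpolPP m β env z o *
            ZpolPP (k * m) β (fun e => env (m + e.1, z + e.2)) (y - z) o := by
  classical
  rw [ZpolPP]
  have hsummand : ∀ s ∈ Finset.univ.filter
      (fun s : Fin (m + k * m) → Fin d × Bool => pos s (m + k * m) = y),
      Real.exp (β * polymerEnergy (m + k * m) env s o)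
        = (fun a : Fin m → Fin d × Bool => Real.exp (β * polymerEnergy m env a o))
            (fun i => s (Fin.castAdd (k * m) i))
          * (fun (z : Fin d → ℤ) (b : Fin (k * m) → Fin d × Bool) =>
              Real.exp (β * polymerEnergy (k * m) (fun e => env (m + e.1, z + e.2)) b o))
            (pos (fun i => s (Fin.castAdd (k * m) i)) m) (fun i => s (Fin.natAdd m i)) := by
    intro s _
    set a : Fin m → Fin d × Bool := fun i => s (Fin.castAdd (k * m) i)
    set b : Fin (k * m) → Fin d × Bool := fun i => s (Fin.natAdd m i)
    have hs : s = Fin.append a b := (append_left_right s).symm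
    conv_lhs => rw [hs]
    rw [polymerEnergy_append env a b o, mul_add, Real.exp_add]
  rw [Finset.sum_congr rfl hsummand,
    sum_split_filter y (fun a : Fin m → Fin d × Bool => Real.exp (β * polymerEnergy m env a o))
      (fun (z : Fin d → ℤ) (b : Fin (k * m) → Fin d × Bool) =>
        Real.exp (β * polymerEnergy (k * m) (fun e => env (m + e.1, z + e.2)) b o))]
  rw [Finset.mul_sum]
  refine Finset.sum_congr rfl fun z _ => ?_
  rw [ZpolPP, ZpolPP, pow_add]
  ring

lemma key_tree (m k : ℕ) (β : ℝ) (envT : List (Fin d → ℤ) × ℕ × (Fin d → ℤ) → Ω → ℝ)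
    (y : Fin d → ℤ) (o : Ω) :
    ZtreePP (m + k * m) m (k + 1) β envT y o
      = ∑ z ∈ Finset.univ.image (fun a : Fin m → Fin d × Bool => pos a m),
          ZpolPP m β (fun e => envT ([], e)) z o *
            ZtreePP (k * m) m k β (fun e => envT (z :: e.1.map (z + ·), e.2)) (y - z) o := by
  classical
  rw [ZtreePP]
  have hsummand : ∀ s ∈ Finset.univ.filter
      (fun s : Fin (m + k * m) → Fin d × Bool => pos s (m + k * m) = y),
      Real.exp (β * treeEnergy (m + k * m) m (k + 1) envT s o)
        = (fun a : Fin m → Fin d × Bool =>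
            Real.exp (β * polymerEnergy m (fun e => envT ([], e)) a o))
            (fun i => s (Fin.castAdd (k * m) i))
          * (fun (z : Fin d → ℤ) (b : Fin (k * m) → Fin d × Bool) =>
              Real.exp (β * treeEnergy (k * m) m k
                (fun e => envT (z :: e.1.map (z + ·), e.2)) b o))
            (pos (fun i => s (Fin.castAdd (k * m) i)) m) (fun i => s (Fin.natAdd m i)) := by
    intro s _
    set a : Fin m → Fin d × Bool := fun i => s (Fin.castAdd (k * m) i)
    set b : Fin (k * m) → Fin d × Bool := fun i => s (Fin.natAdd m i)
    have hs : s = Fin.append a b := (append_left_right s).symm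
    conv_lhs => rw [hs]
    rw [treeEnergy_append k envT a b o, mul_add, Real.exp_add]
  rw [Finset.sum_congr rfl hsummand,
    sum_split_filter y
      (fun a : Fin m → Fin d × Bool =>
        Real.exp (β * polymerEnergy m (fun e => envT ([], e)) a o))
      (fun (z : Fin d → ℤ) (b : Fin (k * m) → Fin d × Bool) =>
        Real.exp (β * treeEnergy (k * m) m k
          (fun e => envT (z :: e.1.map (z + ·), e.2)) b o))]
  rw [Finset.mul_sum]
  refine Finset.sum_congr rfl fun z _ => ?_
  rw [ZpolPP, ZtreePP, pow_add]
  ring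

end KeyIdentities

section Zprops

variable {Ω : Type*} {d : ℕ}

lemma Zpol_nonneg {n : ℕ} (β : ℝ) (env : ℕ × (Fin d → ℤ) → Ω → ℝ) (y : Fin d → ℤ) (o : Ω) :
    0 ≤ ZpolPP n β env y o := by
  refine mul_nonneg (pow_nonneg (inv_nonneg.2 (by positivity)) n) ?_
  exact Finset.sum_nonneg fun s _ => (Real.exp_pos _).le

lemma Ztree_nonneg {n m k : ℕ} (β : ℝ) (envT : List (Fin d → ℤ) × ℕ × (Fin d → ℤ) → Ω → ℝ)
    (y : Fin d → ℤ) (o : Ω) : 0 ≤ ZtreePP n m k β envT y o := by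
  refine mul_nonneg (pow_nonneg (inv_nonneg.2 (by positivity)) n) ?_
  exact Finset.sum_nonneg fun s _ => (Real.exp_pos _).le

lemma Zpol_measurable [MeasurableSpace Ω] {n : ℕ} (β : ℝ) {env : ℕ × (Fin d → ℤ) → Ω → ℝ}
    (henv : ∀ e, Measurable (env e)) (y : Fin d → ℤ) :
    Measurable (fun o => ZpolPP n β env y o) := by
  refine Measurable.const_mul ?_ _
  refine Finset.measurable_sum _ fun s _ => ?_
  exact Real.measurable_exp.comp ((Finset.measurable_sum _ fun i _ => henv _).const_mul β)

lemma Ztree_measurable [MeasurableSpace Ω] {n m k : ℕ} (β : ℝ)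
    {envT : List (Fin d → ℤ) × ℕ × (Fin d → ℤ) → Ω → ℝ}
    (henvT : ∀ e, Measurable (envT e)) (y : Fin d → ℤ) :
    Measurable (fun o => ZtreePP n m k β envT y o) := by
  refine Measurable.const_mul ?_ _
  refine Finset.measurable_sum _ fun s _ => ?_
  refine Real.measurable_exp.comp (Measurable.const_mul ?_ β)
  exact Finset.measurable_sum _ fun l _ => Finset.measurable_sum _ fun j _ => henvT _

lemma Zpol_mono {α : Type*} [Preorder α] {n : ℕ} {β : ℝ} (hβ : 0 ≤ β)
    {env : ℕ × (Fin d → ℤ) → α → ℝ} (henv : ∀ e, Monotone (env e)) (y : Fin d → ℤ) :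
    Monotone (fun x => ZpolPP n β env y x) := by
  intro x x' hx
  refine mul_le_mul_of_nonneg_left ?_ (pow_nonneg (inv_nonneg.2 (by positivity)) n)
  refine Finset.sum_le_sum fun s _ => ?_
  refine Real.exp_le_exp.2 (mul_le_mul_of_nonneg_left ?_ hβ)
  exact Finset.sum_le_sum fun i _ => henv _ hx

lemma Ztree_mono {α : Type*} [Preorder α] {n m k : ℕ} {β : ℝ} (hβ : 0 ≤ β)
    {envT : List (Fin d → ℤ) × ℕ × (Fin d → ℤ) → α → ℝ} (henvT : ∀ e, Monotone (envT e))
    (y : Fin d → ℤ) : Monotone (fun x => ZtreePP n m k β envT y x) := by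
  intro x x' hx
  refine mul_le_mul_of_nonneg_left ?_ (pow_nonneg (inv_nonneg.2 (by positivity)) n)
  refine Finset.sum_le_sum fun s _ => ?_
  refine Real.exp_le_exp.2 (mul_le_mul_of_nonneg_left ?_ hβ)
  exact Finset.sum_le_sum fun l _ => Finset.sum_le_sum fun j _ => henvT _ hx

lemma Zpol_congr {Ω' : Type*} {n : ℕ} (β : ℝ) {env : ℕ × (Fin d → ℤ) → Ω → ℝ}
    {env' : ℕ × (Fin d → ℤ) → Ω' → ℝ} {o : Ω} {o' : Ω'} (y : Fin d → ℤ)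
    (h : ∀ (s : Fin n → Fin d × Bool), ∀ i ∈ Finset.range n,
      env (i + 1, pos s (i + 1)) o = env' (i + 1, pos s (i + 1)) o') :
    ZpolPP n β env y o = ZpolPP n β env' y o' := by
  rw [ZpolPP, ZpolPP]
  refine congrArg _ (Finset.sum_congr rfl fun s _ => ?_)
  refine congrArg _ (congrArg _ (Finset.sum_congr rfl fun i hi => h s i hi))

lemma Ztree_congr {Ω' : Type*} {n m k : ℕ} (β : ℝ)
    {envT : List (Fin d → ℤ) × ℕ × (Fin d → ℤ) → Ω → ℝ}
    {envT' : List (Fin d → ℤ) × ℕ × (Fin d → ℤ) → Ω' → ℝ} {o : Ω} {o' : Ω'} (y : Fin d → ℤ)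
    (h : ∀ (s : Fin n → Fin d × Bool), ∀ l ∈ Finset.range k, ∀ j ∈ Finset.range m,
      envT (treeWord m s l, (j + 1, pos s (l * m + (j + 1)) - pos s (l * m))) o
        = envT' (treeWord m s l, (j + 1, pos s (l * m + (j + 1)) - pos s (l * m))) o') :
    ZtreePP n m k β envT y o = ZtreePP n m k β envT' y o' := by
  rw [ZtreePP, ZtreePP]
  refine congrArg _ (Finset.sum_congr rfl fun s _ => ?_)
  refine congrArg _ (congrArg _ (Finset.sum_congr rfl fun l hl => Finset.sum_congr rfl
    fun j hj => h s l hl j hj))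

end Zprops

section UsedSets

variable {d : ℕ}

/-- Environment indices that can appear in a polymer partition function of length `q`. -/
def usedPol (d q : ℕ) : Finset (ℕ × (Fin d → ℤ)) :=
  Finset.image (fun p : (Fin q → Fin d × Bool) × ℕ => (p.2 + 1, pos p.1 (p.2 + 1)))
    (Finset.univ ×ˢ Finset.range q)

lemma mem_usedPol {q i : ℕ} (s : Fin q → Fin d × Bool) (hi : i ∈ Finset.range q) :
    (i + 1, pos s (i + 1)) ∈ usedPol d q :=
  Finset.mem_image.2 ⟨(s, i), Finset.mem_product.2 ⟨Finset.mem_univ s, hi⟩, rfl⟩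

/-- Tree environment indices that can appear in an `m`-tree partition function
with `k` blocks on paths of length `q`. -/
def usedTree (d q m k : ℕ) : Finset (List (Fin d → ℤ) × ℕ × (Fin d → ℤ)) :=
  Finset.image (fun p : (Fin q → Fin d × Bool) × ℕ × ℕ =>
      (treeWord m p.1 p.2.1, (p.2.2 + 1, pos p.1 (p.2.1 * m + (p.2.2 + 1)) - pos p.1 (p.2.1 * m))))
    (Finset.univ ×ˢ Finset.range k ×ˢ Finset.range m)

lemma mem_usedTree {q m k : ℕ} (s : Fin q → Fin d × Bool) {l j : ℕ}
    (hl : l ∈ Finset.range k) (hj : j ∈ Finset.range m) :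
    (treeWord m s l, (j + 1, pos s (l * m + (j + 1)) - pos s (l * m))) ∈ usedTree d q m k :=
  Finset.mem_image.2 ⟨(s, l, j), Finset.mem_product.2 ⟨Finset.mem_univ s,
    Finset.mem_product.2 ⟨hl, hj⟩⟩, rfl⟩

/-- Time/space shift of a polymer environment index. -/
def uzf (d m : ℕ) (z : Fin d → ℤ) : ℕ × (Fin d → ℤ) → ℕ × (Fin d → ℤ) :=
  fun e => (m + e.1, z + e.2)

lemma uzf_injective (d m : ℕ) (z : Fin d → ℤ) : Function.Injective (uzf d m z) := by
  intro e e' h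
  rw [uzf, uzf, Prod.mk.injEq] at h
  exact Prod.ext (by omega) (by have := h.2; exact add_left_cancel this)

/-- Word shift of a tree environment index. -/
def vzf (d : ℕ) (z : Fin d → ℤ) :
    List (Fin d → ℤ) × ℕ × (Fin d → ℤ) → List (Fin d → ℤ) × ℕ × (Fin d → ℤ) :=
  fun e => (z :: e.1.map (z + ·), e.2)

lemma vzf_injective (d : ℕ) (z : Fin d → ℤ) : Function.Injective (vzf d z) := by
  intro e e' h
  rw [vzf, vzf, Prod.mk.injEq, List.cons.injEq] at h
  refine Prod.ext ?_ h.2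
  have hinj : Function.Injective (fun x : Fin d → ℤ => z + x) := fun a b hab => by
    exact add_left_cancel hab
  exact List.map_injective_iff.2 hinj h.1.2

/-- Embedding of polymer indices as root-block tree indices. -/
def w0f (d : ℕ) : ℕ × (Fin d → ℤ) → List (Fin d → ℤ) × ℕ × (Fin d → ℤ) :=
  fun e => ([], e)

lemma w0f_injective (d : ℕ) : Function.Injective (w0f d) := fun e e' h => by
  rw [w0f, w0f, Prod.mk.injEq] at h
  exact h.2

end UsedSets

section Ext0

variable {J : Type*} [DecidableEq J]

/-- Extension of a configuration on a finset by `0`. -/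
def ext0 (S : Finset J) (x : ↥S → ℝ) : J → ℝ := fun e => if h : e ∈ S then x ⟨e, h⟩ else 0

lemma ext0_apply_mem (S : Finset J) (x : ↥S → ℝ) {e : J} (h : e ∈ S) :
    ext0 S x e = x ⟨e, h⟩ := dif_pos h

lemma ext0_monotone (S : Finset J) (e : J) : Monotone (fun x : ↥S → ℝ => ext0 S x e) := by
  intro x x' hx
  simp only
  by_cases h : e ∈ S
  · rw [ext0_apply_mem S x h, ext0_apply_mem S x' h]
    exact hx _
  · simp only [ext0, dif_neg h]
    exact le_refl 0

lemma ext0_measurable (S : Finset J) (e : J) :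
    Measurable (fun x : ↥S → ℝ => ext0 S x e) := by
  by_cases h : e ∈ S
  · simp only [ext0, dif_pos h]
    exact measurable_pi_apply _
  · simp only [ext0, dif_neg h]
    exact measurable_const

end Ext0



lemma expz_bdd01 {Ω : Type*} {t : ℝ} (ht : 0 ≤ t) {Z : Ω → ℝ} (hZ : ∀ o, 0 ≤ Z o) :
    Bdd01 (fun o => Real.exp (-t * Z o)) := fun o =>
  ⟨(Real.exp_pos _).le, by rw [Real.exp_le_one_iff]; nlinarith [hZ o]⟩

section MainStep

variable {Ω : Type*} [MeasurableSpace Ω] {μ : Measure Ω} [IsProbabilityMeasure μ]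
  {ν : Measure ℝ} [IsProbabilityMeasure ν]

/-- The inductive step: conditioning on the first block, Harris inequality, and the
induction hypothesis give the comparison for `k+1` blocks. -/
lemma step_key (d m k : ℕ) (β : ℝ) (hβ : 0 < β)
    (env : ℕ × (Fin d → ℤ) → Ω → ℝ) (henv : IID μ env ν)
    (envT : List (Fin d → ℤ) × ℕ × (Fin d → ℤ) → Ω → ℝ) (henvT : IID μ envT ν)
    (ih : ∀ env' : ℕ × (Fin d → ℤ) → Ω → ℝ, IID μ env' ν →
      ∀ envT' : List (Fin d → ℤ) × ℕ × (Fin d → ℤ) → Ω → ℝ, IID μ envT' ν →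
      ∀ (y : Fin d → ℤ) (t : ℝ), 0 ≤ t →
        ∫ o, Real.exp (-t * ZtreePP (k * m) m k β envT' y o) ∂μ
          ≤ ∫ o, Real.exp (-t * ZpolPP (k * m) β env' y o) ∂μ)
    (y : Fin d → ℤ) (lam : ℝ) (hlam : 0 ≤ lam) :
    ∫ o, Real.exp (-lam * ZtreePP (m + k * m) m (k + 1) β envT y o) ∂μ
      ≤ ∫ o, Real.exp (-lam * ZpolPP (m + k * m) β env y o) ∂μ := by
  -- endpoint set of the first block
  set Zff : Finset (Fin d → ℤ) :=
    Finset.univ.image (fun a : Fin m → Fin d × Bool => pos a m) with hZff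
  -- index sets
  set J1 : Finset (ℕ × (Fin d → ℤ)) := usedPol d m with hJ1
  set J2 : Finset (ℕ × (Fin d → ℤ)) :=
    Zff.biUnion (fun z => (usedPol d (k * m)).image (uzf d m z)) with hJ2
  set K1 : Finset (List (Fin d → ℤ) × ℕ × (Fin d → ℤ)) := J1.image (w0f d) with hK1
  set TK : (Fin d → ℤ) → Finset (List (Fin d → ℤ) × ℕ × (Fin d → ℤ)) :=
    fun z => (usedTree d (k * m) m k).image (vzf d z) with hTK
  set K2 : Finset (List (Fin d → ℤ) × ℕ × (Fin d → ℤ)) := Zff.biUnion TK with hK2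
  -- block functionals on configuration spaces
  set AX : (Fin d → ℤ) → (↥J1 → ℝ) → ℝ :=
    fun z x => ZpolPP m β (fun e x' => ext0 J1 x' e) z x with hAX
  set BX : (Fin d → ℤ) → (↥J2 → ℝ) → ℝ :=
    fun z x => ZpolPP (k * m) β (fun e x' => ext0 J2 x' (uzf d m z e)) (y - z) x with hBX
  set AXK : (Fin d → ℤ) → (↥K1 → ℝ) → ℝ :=
    fun z x => ZpolPP m β (fun e x' => ext0 K1 x' (w0f d e)) z x with hAXK
  set BXT : (Fin d → ℤ) → (↥K2 → ℝ) → ℝ :=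
    fun z x => ZtreePP (k * m) m k β (fun e x' => ext0 K2 x' (vzf d z e)) (y - z) x with hBXT
  -- the tail Laplace transform of the tree continuation
  set g : (Fin d → ℤ) → ℝ → ℝ := fun z t =>
    ∫ o, Real.exp (-(max t 0) * ZtreePP (k * m) m k β (fun e => envT (vzf d z e)) (y - z) o) ∂μ
    with hg
  -- basic facts
  have hZnn : ∀ (q : ℕ) (envq : ℕ × (Fin d → ℤ) → Ω → ℝ) (yq : Fin d → ℤ) (o : Ω),
      0 ≤ ZpolPP q β envq yq o := fun q envq yq o => Zpol_nonneg β envq yq o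
  have hAXm : ∀ z, Measurable (AX z) :=
    fun z => Zpol_measurable β (fun e => ext0_measurable J1 e) z
  have hAXnn : ∀ z x, 0 ≤ AX z x := fun z x => Zpol_nonneg _ _ _ _
  have hAXKm : ∀ z, Measurable (AXK z) :=
    fun z => Zpol_measurable β (fun e => ext0_measurable K1 (w0f d e)) z
  have hAXKnn : ∀ z x, 0 ≤ AXK z x := fun z x => Zpol_nonneg _ _ _ _
  have hBXm : ∀ z, Measurable (BX z) :=
    fun z => Zpol_measurable β (fun e => ext0_measurable J2 (uzf d m z e)) _
  have hBXnn : ∀ z x, 0 ≤ BX z x := fun z x => Zpol_nonneg _ _ _ _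
  have hBXmono : ∀ z, Monotone (BX z) :=
    fun z => Zpol_mono hβ.le (fun e => ext0_monotone J2 (uzf d m z e)) _
  have hBXTm : ∀ z, Measurable (BXT z) :=
    fun z => Ztree_measurable β (fun e => ext0_measurable K2 (vzf d z e)) _
  have hBXTnn : ∀ z x, 0 ≤ BXT z x := fun z x => Ztree_nonneg _ _ _ _
  -- membership facts
  have hmemJ2 : ∀ z ∈ Zff, ∀ e ∈ usedPol d (k * m), uzf d m z e ∈ J2 := by
    intro z hz e he
    exact Finset.mem_biUnion.2 ⟨z, hz, Finset.mem_image_of_mem _ he⟩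
  have hmemK1 : ∀ e ∈ J1, w0f d e ∈ K1 := fun e he => Finset.mem_image_of_mem _ he
  have hmemTK : ∀ z, ∀ e ∈ usedTree d (k * m) m k, vzf d z e ∈ TK z :=
    fun z e he => Finset.mem_image_of_mem _ he
  have hmemK2 : ∀ z ∈ Zff, ∀ e ∈ usedTree d (k * m) m k, vzf d z e ∈ K2 := by
    intro z hz e he
    exact Finset.mem_biUnion.2 ⟨z, hz, hmemTK z e he⟩
  -- disjointness
  have hd12 : Disjoint J1 J2 := by
    rw [Finset.disjoint_left]
    intro e he1 he2
    obtain ⟨⟨s, i⟩, hmem, rfl⟩ := Finset.mem_image.1 he1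
    obtain ⟨z, hz, he2'⟩ := Finset.mem_biUnion.1 he2
    obtain ⟨e', he'mem, he'⟩ := Finset.mem_image.1 he2'
    obtain ⟨⟨s', i'⟩, hmem', rfl⟩ := Finset.mem_image.1 he'mem
    have h1 : i ∈ Finset.range m := (Finset.mem_product.1 hmem).2
    rw [Finset.mem_range] at h1
    have h2 := congrArg Prod.fst he'
    simp only [uzf] at h2
    omega
  have hdK : Disjoint K1 K2 := by
    rw [Finset.disjoint_left]
    intro e he1 he2
    obtain ⟨e1, _, rfl⟩ := Finset.mem_image.1 he1
    obtain ⟨z, hz, he2'⟩ := Finset.mem_biUnion.1 he2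
    obtain ⟨e2, _, he2''⟩ := Finset.mem_image.1 he2'
    have : (vzf d z e2).1 = (w0f d e1).1 := by rw [he2'']
    simp [vzf, w0f] at this
  have hTKdisj : ∀ z ∈ Zff, ∀ z' ∈ Zff, z ≠ z' → Disjoint (TK z) (TK z') := by
    intro z _ z' _ hne
    rw [Finset.disjoint_left]
    intro e he1 he2
    obtain ⟨e1, _, rfl⟩ := Finset.mem_image.1 he1
    obtain ⟨e2, _, he2''⟩ := Finset.mem_image.1 he2
    have : (vzf d z' e2).1 = (vzf d z e1).1 := by rw [he2'']
    simp only [vzf] at this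
    exact hne (List.head_eq_of_cons_eq this).symm
  -- polymer side functional
  set Fpol : (↥J1 → ℝ) × (↥J2 → ℝ) → ℝ :=
    fun p => Real.exp (-lam * ∑ z ∈ Zff, AX z p.1 * BX z p.2) with hFpol
  have hFpolMeas : Measurable Fpol := by
    refine Real.measurable_exp.comp (Measurable.const_mul ?_ _)
    refine Finset.measurable_sum _ fun z _ => ?_
    exact ((hAXm z).comp measurable_fst).mul ((hBXm z).comp measurable_snd)
  have hFpolBdd : Bdd01 Fpol := by
    intro p
    refine ⟨(Real.exp_pos _).le, ?_⟩
    rw [Real.exp_le_one_iff]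
    have h0 : 0 ≤ ∑ z ∈ Zff, AX z p.1 * BX z p.2 :=
      Finset.sum_nonneg fun z _ => mul_nonneg (hAXnn z _) (hBXnn z _)
    nlinarith
  have hptPol : ∀ o, Real.exp (-lam * ZpolPP (m + k * m) β env y o)
      = Fpol (tup env J1 o, tup env J2 o) := by
    intro o
    rw [key_pol m k β env y o, hFpol]
    refine congrArg Real.exp (congrArg (fun w => -lam * w) ?_)
    refine Finset.sum_congr rfl fun z hz => ?_
    have hA : ZpolPP m β env z o = AX z (tup env J1 o) := by
      refine Zpol_congr β z fun s i hi => ?_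
      rw [ext0_apply_mem J1 _ (mem_usedPol s hi)]
      rfl
    have hB : ZpolPP (k * m) β (fun e => env (m + e.1, z + e.2)) (y - z) o
        = BX z (tup env J2 o) := by
      refine Zpol_congr β (y - z) fun s i hi => ?_
      rw [ext0_apply_mem J2 _ (hmemJ2 z hz _ (mem_usedPol s hi))]
      rfl
    rw [hA, hB]
  have hchainPol : ∫ o, Real.exp (-lam * ZpolPP (m + k * m) β env y o) ∂μ
      = ∫ x1, ∫ x2, Fpol (x1, x2)
          ∂(Measure.pi fun _ : ↥J2 => ν) ∂(Measure.pi fun _ : ↥J1 => ν) := by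
    rw [integral_congr_ae (Filter.Eventually.of_forall hptPol),
      ← integral_tup_prod henv J1 J2 hd12 hFpolMeas,
      MeasureTheory.integral_prod _ (Bdd01.integrable hFpolMeas hFpolBdd)]
  -- properties of the tail Laplace transform g
  have hTreeCont_meas : ∀ z, Measurable
      (fun o => ZtreePP (k * m) m k β (fun e => envT (vzf d z e)) (y - z) o) := by
    intro z
    exact Ztree_measurable β (fun e => henvT.1 (vzf d z e)) _
  have hTreeCont_nn : ∀ z o, 0 ≤ ZtreePP (k * m) m k β (fun e => envT (vzf d z e)) (y - z) o :=
    fun z o => Ztree_nonneg _ _ _ _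
  have hgAnti : ∀ z, Antitone (g z) := by
    intro z t t' htt'
    rw [hg]
    refine integral_mono ?_ ?_ ?_
    · exact Bdd01.integrable (Real.measurable_exp.comp ((hTreeCont_meas z).const_mul _))
        (expz_bdd01 (le_max_right _ _) (hTreeCont_nn z))
    · exact Bdd01.integrable (Real.measurable_exp.comp ((hTreeCont_meas z).const_mul _))
        (expz_bdd01 (le_max_right _ _) (hTreeCont_nn z))
    · intro o
      refine Real.exp_le_exp.2 ?_
      have h1 : max t 0 ≤ max t' 0 := max_le_max htt' (le_refl 0)
      nlinarith [hTreeCont_nn z o, le_max_right t 0]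
  have hgMeas : ∀ z, Measurable (g z) := fun z => (hgAnti z).measurable
  have hgBdd : ∀ z t, 0 ≤ g z t ∧ g z t ≤ 1 := by
    intro z t
    constructor
    · exact (expz_bdd01 (le_max_right _ _) (hTreeCont_nn z)).integral_nonneg
    · exact Bdd01.integral_le_one
        (Real.measurable_exp.comp ((hTreeCont_meas z).const_mul _))
        (expz_bdd01 (le_max_right _ _) (hTreeCont_nn z))
  -- inner bound via Harris and the induction hypothesis
  have hinner : ∀ x1 : ↥J1 → ℝ,
      (∏ z ∈ Zff, g z (lam * AX z x1))
        ≤ ∫ x2, Fpol (x1, x2) ∂(Measure.pi fun _ : ↥J2 => ν) := by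
    intro x1
    have hprod : ∀ x2, Fpol (x1, x2)
        = ∏ z ∈ Zff, Real.exp (-(lam * AX z x1) * BX z x2) := by
      intro x2
      rw [hFpol]
      simp only
      rw [Finset.mul_sum, Real.exp_sum]
      refine Finset.prod_congr rfl fun z _ => congrArg Real.exp (by ring)
    have hmeasz : ∀ z ∈ Zff, Measurable (fun x2 => Real.exp (-(lam * AX z x1) * BX z x2)) :=
      fun z _ => Real.measurable_exp.comp ((hBXm z).const_mul _)
    have hantiz : ∀ z ∈ Zff, Antitone (fun x2 => Real.exp (-(lam * AX z x1) * BX z x2)) := by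
      intro z _ x2 x2' hx
      refine Real.exp_le_exp.2 ?_
      have h1 := hBXmono z hx
      have h2 : 0 ≤ lam * AX z x1 := mul_nonneg hlam (hAXnn z x1)
      nlinarith [hBXnn z x2]
    have hbddz : ∀ z ∈ Zff, Bdd01 (fun x2 => Real.exp (-(lam * AX z x1) * BX z x2)) :=
      fun z _ => expz_bdd01 (mul_nonneg hlam (hAXnn z x1)) (hBXnn z)
    have hH := harris_finset_prod (harris_pi ν) Zff
      (fun z x2 => Real.exp (-(lam * AX z x1) * BX z x2)) hmeasz hantiz hbddz
    have hfactor : ∀ z ∈ Zff, g z (lam * AX z x1)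
        ≤ ∫ x2, Real.exp (-(lam * AX z x1) * BX z x2) ∂(Measure.pi fun _ : ↥J2 => ν) := by
      intro z hz
      have ht0 : 0 ≤ lam * AX z x1 := mul_nonneg hlam (hAXnn z x1)
      have hid : ∫ x2, Real.exp (-(lam * AX z x1) * BX z x2) ∂(Measure.pi fun _ : ↥J2 => ν)
          = ∫ o, Real.exp (-(lam * AX z x1)
              * ZpolPP (k * m) β (fun e => env (uzf d m z e)) (y - z) o) ∂μ := by
        rw [integral_tup henv J2
          (F := fun x2 => Real.exp (-(lam * AX z x1) * BX z x2))
          (Real.measurable_exp.comp ((hBXm z).const_mul _))]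
        refine integral_congr_ae (Filter.Eventually.of_forall fun o => ?_)
        refine congrArg Real.exp (congrArg _ ?_)
        refine (Zpol_congr β (y - z) fun s i hi => ?_)
        rw [ext0_apply_mem J2 _ (hmemJ2 z hz _ (mem_usedPol s hi))]
        rfl
      rw [hid, hg]
      simp only
      rw [max_eq_left ht0]
      exact ih (fun e => env (uzf d m z e)) (henv.precomp _ (uzf_injective d m z))
        (fun e => envT (vzf d z e)) (henvT.precomp _ (vzf_injective d z)) (y - z) _ ht0
    calc ∏ z ∈ Zff, g z (lam * AX z x1)
        ≤ ∏ z ∈ Zff, ∫ x2, Real.exp (-(lam * AX z x1) * BX z x2)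
            ∂(Measure.pi fun _ : ↥J2 => ν) := by
          refine Finset.prod_le_prod (fun z _ => (hgBdd z _).1) hfactor
      _ ≤ ∫ x2, ∏ z ∈ Zff, Real.exp (-(lam * AX z x1) * BX z x2)
            ∂(Measure.pi fun _ : ↥J2 => ν) := hH
      _ = ∫ x2, Fpol (x1, x2) ∂(Measure.pi fun _ : ↥J2 => ν) := by
          refine integral_congr_ae (Filter.Eventually.of_forall fun x2 => (hprod x2).symm)
  -- outer comparison
  have hPsiMeas : Measurable (fun x1 : ↥J1 → ℝ => ∏ z ∈ Zff, g z (lam * AX z x1)) := by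
    refine Finset.measurable_prod _ fun z _ => ?_
    exact (hgMeas z).comp ((hAXm z).const_mul lam)
  have hPsiBdd : Bdd01 (fun x1 : ↥J1 → ℝ => ∏ z ∈ Zff, g z (lam * AX z x1)) := by
    intro x1
    constructor
    · exact Finset.prod_nonneg fun z _ => (hgBdd z _).1
    · exact Finset.prod_le_one (fun z _ => (hgBdd z _).1) (fun z _ => (hgBdd z _).2)
  have houter : ∫ x1, (∏ z ∈ Zff, g z (lam * AX z x1)) ∂(Measure.pi fun _ : ↥J1 => ν)
      ≤ ∫ x1, ∫ x2, Fpol (x1, x2)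
          ∂(Measure.pi fun _ : ↥J2 => ν) ∂(Measure.pi fun _ : ↥J1 => ν) := by
    refine integral_mono (Bdd01.integrable hPsiMeas hPsiBdd) ?_ hinner
    refine Bdd01.integrable ((hFpolMeas.stronglyMeasurable.integral_prod_right').measurable) ?_
    intro x1
    constructor
    · exact Bdd01.integral_nonneg (fun x2 => hFpolBdd (x1, x2))
    · exact Bdd01.integral_le_one (hFpolMeas.comp measurable_prodMk_left)
        (fun x2 => hFpolBdd (x1, x2))
  -- tree side functional
  set Ftree : (↥K1 → ℝ) × (↥K2 → ℝ) → ℝ :=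
    fun p => Real.exp (-lam * ∑ z ∈ Zff, AXK z p.1 * BXT z p.2) with hFtree
  have hFtreeMeas : Measurable Ftree := by
    refine Real.measurable_exp.comp (Measurable.const_mul ?_ _)
    refine Finset.measurable_sum _ fun z _ => ?_
    exact ((hAXKm z).comp measurable_fst).mul ((hBXTm z).comp measurable_snd)
  have hFtreeBdd : Bdd01 Ftree := by
    intro p
    refine ⟨(Real.exp_pos _).le, ?_⟩
    rw [Real.exp_le_one_iff]
    have h0 : 0 ≤ ∑ z ∈ Zff, AXK z p.1 * BXT z p.2 :=
      Finset.sum_nonneg fun z _ => mul_nonneg (hAXKnn z _) (hBXTnn z _)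
    nlinarith
  have hptTree : ∀ o, Real.exp (-lam * ZtreePP (m + k * m) m (k + 1) β envT y o)
      = Ftree (tup envT K1 o, tup envT K2 o) := by
    intro o
    rw [key_tree m k β envT y o, hFtree]
    refine congrArg Real.exp (congrArg (fun w => -lam * w) ?_)
    refine Finset.sum_congr rfl fun z hz => ?_
    have hA : ZpolPP m β (fun e => envT ([], e)) z o = AXK z (tup envT K1 o) := by
      refine Zpol_congr β z fun s i hi => ?_
      rw [ext0_apply_mem K1 _ (hmemK1 _ (mem_usedPol s hi))]
      rfl
    have hB : ZtreePP (k * m) m k β (fun e => envT (z :: e.1.map (z + ·), e.2)) (y - z) o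
        = BXT z (tup envT K2 o) := by
      refine Ztree_congr β (y - z) fun s l hl j hj => ?_
      rw [ext0_apply_mem K2 _ (hmemK2 z hz _ (mem_usedTree s hl hj))]
      rfl
    rw [hA, hB]
  have hchainTree : ∫ o, Real.exp (-lam * ZtreePP (m + k * m) m (k + 1) β envT y o) ∂μ
      = ∫ x1, ∫ x2, Ftree (x1, x2)
          ∂(Measure.pi fun _ : ↥K2 => ν) ∂(Measure.pi fun _ : ↥K1 => ν) := by
    rw [integral_congr_ae (Filter.Eventually.of_forall hptTree),
      ← integral_tup_prod henvT K1 K2 hdK hFtreeMeas,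
      MeasureTheory.integral_prod _ (Bdd01.integrable hFtreeMeas hFtreeBdd)]
  -- inner tree integral factorizes exactly
  have hinnerT : ∀ x1 : ↥K1 → ℝ,
      ∫ x2, Ftree (x1, x2) ∂(Measure.pi fun _ : ↥K2 => ν)
        = ∏ z ∈ Zff, g z (lam * AXK z x1) := by
    intro x1
    have hprodT : ∀ x2, Ftree (x1, x2)
        = ∏ z ∈ Zff, Real.exp (-(lam * AXK z x1) * BXT z x2) := by
      intro x2
      rw [hFtree]
      simp only
      rw [Finset.mul_sum, Real.exp_sum]
      refine Finset.prod_congr rfl fun z _ => congrArg Real.exp (by ring)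
    have hmeasPT : Measurable (fun x2 : ↥K2 → ℝ =>
        ∏ z ∈ Zff, Real.exp (-(lam * AXK z x1) * BXT z x2)) :=
      Finset.measurable_prod _ fun z _ => Real.measurable_exp.comp ((hBXTm z).const_mul _)
    have hstep1 : ∫ x2, Ftree (x1, x2) ∂(Measure.pi fun _ : ↥K2 => ν)
        = ∫ o, ∏ z ∈ Zff, Real.exp (-(lam * AXK z x1)
            * ZtreePP (k * m) m k β (fun e => envT (vzf d z e)) (y - z) o) ∂μ := by
      rw [integral_congr_ae (Filter.Eventually.of_forall fun x2 => hprodT x2),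
        integral_tup henvT K2 (F := fun x2 : ↥K2 → ℝ =>
          ∏ z ∈ Zff, Real.exp (-(lam * AXK z x1) * BXT z x2)) hmeasPT]
      refine integral_congr_ae (Filter.Eventually.of_forall fun o => ?_)
      refine Finset.prod_congr rfl fun z hz => congrArg Real.exp (congrArg _ ?_)
      refine Ztree_congr β (y - z) fun s l hl j hj => ?_
      rw [ext0_apply_mem K2 _ (hmemK2 z hz _ (mem_usedTree s hl hj))]
      rfl
    have hstep2 : ∫ o, ∏ z ∈ Zff, Real.exp (-(lam * AXK z x1)
            * ZtreePP (k * m) m k β (fun e => envT (vzf d z e)) (y - z) o) ∂μ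
        = ∏ z ∈ Zff, ∫ o, Real.exp (-(lam * AXK z x1)
            * ZtreePP (k * m) m k β (fun e => envT (vzf d z e)) (y - z) o) ∂μ := by
      refine integral_finset_prod_of_disjoint henvT Zff TK hTKdisj _ ?_ ?_
      · intro z _
        refine ⟨fun x => Real.exp (-(lam * AXK z x1)
          * ZtreePP (k * m) m k β (fun e x' => ext0 (TK z) x' (vzf d z e)) (y - z) x),
          Real.measurable_exp.comp
            ((Ztree_measurable β (fun e => ext0_measurable (TK z) (vzf d z e)) _).const_mul _),
          fun o => ?_⟩
        refine congrArg Real.exp (congrArg _ ?_)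
        refine Ztree_congr β (y - z) fun s l hl j hj => ?_
        rw [ext0_apply_mem (TK z) _ (hmemTK z _ (mem_usedTree s hl hj))]
        rfl
      · intro z _
        exact expz_bdd01 (mul_nonneg hlam (hAXKnn z x1)) (hTreeCont_nn z)
    have hstep3 : ∀ z ∈ Zff, ∫ o, Real.exp (-(lam * AXK z x1)
            * ZtreePP (k * m) m k β (fun e => envT (vzf d z e)) (y - z) o) ∂μ
        = g z (lam * AXK z x1) := by
      intro z _
      rw [hg]
      simp only
      rw [max_eq_left (mul_nonneg hlam (hAXKnn z x1))]
    rw [hstep1, hstep2]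
    exact Finset.prod_congr rfl hstep3
  have htreeval : ∫ o, Real.exp (-lam * ZtreePP (m + k * m) m (k + 1) β envT y o) ∂μ
      = ∫ x1, (∏ z ∈ Zff, g z (lam * AXK z x1)) ∂(Measure.pi fun _ : ↥K1 => ν) := by
    rw [hchainTree]
    exact integral_congr_ae (Filter.Eventually.of_forall hinnerT)
  -- both first-block laws agree
  have hPsiKMeas : Measurable (fun x1 : ↥K1 → ℝ => ∏ z ∈ Zff, g z (lam * AXK z x1)) := by
    refine Finset.measurable_prod _ fun z _ => ?_
    exact (hgMeas z).comp ((hAXKm z).const_mul lam)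
  have hid1 : ∫ x1, (∏ z ∈ Zff, g z (lam * AXK z x1)) ∂(Measure.pi fun _ : ↥K1 => ν)
      = ∫ o, (∏ z ∈ Zff, g z (lam * ZpolPP m β (fun e => envT (w0f d e)) z o)) ∂μ := by
    rw [integral_tup henvT K1
      (F := fun x1 : ↥K1 → ℝ => ∏ z ∈ Zff, g z (lam * AXK z x1)) hPsiKMeas]
    refine integral_congr_ae (Filter.Eventually.of_forall fun o => ?_)
    refine Finset.prod_congr rfl fun z _ => congrArg (g z) (congrArg _ ?_)
    refine (Zpol_congr β z fun s i hi => ?_).symm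
    rw [ext0_apply_mem K1 _ (hmemK1 _ (mem_usedPol s hi))]
    rfl
  have hid2 : ∫ x1, (∏ z ∈ Zff, g z (lam * AX z x1)) ∂(Measure.pi fun _ : ↥J1 => ν)
      = ∫ o, (∏ z ∈ Zff, g z (lam * ZpolPP m β (fun e => envT (w0f d e)) z o)) ∂μ := by
    rw [integral_tup (henvT.precomp (w0f d) (w0f_injective d)) J1
      (F := fun x1 : ↥J1 → ℝ => ∏ z ∈ Zff, g z (lam * AX z x1)) hPsiMeas]
    refine integral_congr_ae (Filter.Eventually.of_forall fun o => ?_)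
    refine Finset.prod_congr rfl fun z _ => congrArg (g z) (congrArg _ ?_)
    refine (Zpol_congr β z fun s i hi => ?_).symm
    rw [ext0_apply_mem J1 _ (mem_usedPol s hi)]
    rfl
  calc ∫ o, Real.exp (-lam * ZtreePP (m + k * m) m (k + 1) β envT y o) ∂μ
      = ∫ x1, (∏ z ∈ Zff, g z (lam * AXK z x1)) ∂(Measure.pi fun _ : ↥K1 => ν) := htreeval
    _ = ∫ o, (∏ z ∈ Zff, g z (lam * ZpolPP m β (fun e => envT (w0f d e)) z o)) ∂μ := hid1
    _ = ∫ x1, (∏ z ∈ Zff, g z (lam * AX z x1)) ∂(Measure.pi fun _ : ↥J1 => ν) := hid2.symm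
    _ ≤ ∫ x1, ∫ x2, Fpol (x1, x2)
          ∂(Measure.pi fun _ : ↥J2 => ν) ∂(Measure.pi fun _ : ↥J1 => ν) := houter
    _ = ∫ o, Real.exp (-lam * ZpolPP (m + k * m) β env y o) ∂μ := hchainPol.symm

end MainStep

/-- For `d, m ≥ 1`, `n = k m` and `β > 0`, if the i.i.d. environment has a
finite exponential moment, then for every endpoint `y ∈ ℤ^d` the point-to-point polymer
partition function is dominated by the point-to-point `m`-tree partition function in the
Laplace transform order: `𝔼[exp(−λ Z_n^{pol}(y))] ≥ 𝔼[exp(−λ Z_n^{m-tree}(y))]` for `λ ≥ 0`. -/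
theorem polymerPP_le_mtreePP_laplaceOrder
    {Ω : Type*} [MeasurableSpace Ω] (μ : Measure Ω) [IsProbabilityMeasure μ]
    (d m k : ℕ) (hd : 1 ≤ d) (hm : 1 ≤ m) (hk : 1 ≤ k) (n : ℕ) (hn : n = k * m)
    (β : ℝ) (hβ : 0 < β) (ν : Measure ℝ) [IsProbabilityMeasure ν]
    (env : ℕ × (Fin d → ℤ) → Ω → ℝ) (henv : IID μ env ν)
    (envT : List (Fin d → ℤ) × ℕ × (Fin d → ℤ) → Ω → ℝ) (henvT : IID μ envT ν)
    (hmom : Integrable (fun o => Real.exp (β * env (1, fun _ => 0) o)) μ) :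
    ∀ y : Fin d → ℤ, ∀ lam : ℝ, 0 ≤ lam →
      ∫ o, Real.exp (-lam * ZtreePP n m k β envT y o) ∂μ
        ≤ ∫ o, Real.exp (-lam * ZpolPP n β env y o) ∂μ := by
  have claim : ∀ (k' : ℕ) (n' : ℕ), n' = k' * m →
      ∀ env' : ℕ × (Fin d → ℤ) → Ω → ℝ, IID μ env' ν →
      ∀ envT' : List (Fin d → ℤ) × ℕ × (Fin d → ℤ) → Ω → ℝ, IID μ envT' ν →
      ∀ (y : Fin d → ℤ) (lam : ℝ), 0 ≤ lam →
      ∫ o, Real.exp (-lam * ZtreePP n' m k' β envT' y o) ∂μ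
        ≤ ∫ o, Real.exp (-lam * ZpolPP n' β env' y o) ∂μ := by
    intro k'
    induction k' with
    | zero =>
      intro n' hn' env' _ envT' _ y lam _
      obtain rfl : n' = 0 := by rw [hn', Nat.zero_mul]
      refine le_of_eq (integral_congr_ae (Filter.Eventually.of_forall fun o => ?_))
      have h1 : ZtreePP 0 m 0 β envT' y o = ZpolPP 0 β env' y o := by
        rw [ZtreePP, ZpolPP]
        refine congrArg _ (Finset.sum_congr rfl fun s _ => ?_)
        rw [treeEnergy, polymerEnergy]
        simp
      exact congrArg (fun w => Real.exp (-lam * w)) h1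
    | succ k'' ih =>
      intro n' hn' env' henv' envT' henvT' y lam hlam
      obtain rfl : n' = m + k'' * m := by rw [hn']; ring
      refine step_key d m k'' β hβ env' henv' envT' henvT' ?_ y lam hlam
      intro env2 henv2 envT2 henvT2 y2 t ht
      exact ih (k'' * m) rfl env2 henv2 envT2 henvT2 y2 t ht
  exact claim k n hn env henv envT henvT
end
end

section
/- Let X and Y be strictly positive random variables with X ≤_Lt Y. Then log X ≤_Lt log Y; equivalently, 𝔼[X^{−λ}] ≥ 𝔼[Y^{−λ}] for every λ ≥ 0. -/
open MeasureTheory Set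

/-- Gamma-integral representation of `x ^ (-lam)` in `ℝ≥0∞`. -/
lemma ofReal_rpow_neg_eq_lintegral {x lam : ℝ} (hx : 0 < x) (hlam : 0 < lam) :
    ENNReal.ofReal (x ^ (-lam) * Real.Gamma lam)
      = ∫⁻ t in Ioi (0:ℝ), ENNReal.ofReal (t ^ (lam - 1) * Real.exp (-(x * t))) := by
  have hint : IntegrableOn (fun t : ℝ => t ^ (lam - 1) * Real.exp (-(x * t))) (Ioi 0) := by
    have := integrableOn_rpow_mul_exp_neg_mul_rpow (p := 1) (s := lam - 1) (b := x)
      (by linarith) zero_lt_one hx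
    simpa using this
  have hval : ∫ t in Ioi (0:ℝ), t ^ (lam - 1) * Real.exp (-(x * t))
      = (1 / x) ^ lam * Real.Gamma lam := Real.integral_rpow_mul_exp_neg_mul_Ioi hlam hx
  have hnn : 0 ≤ᵐ[volume.restrict (Ioi (0:ℝ))]
      fun t => t ^ (lam - 1) * Real.exp (-(x * t)) := by
    filter_upwards [ae_restrict_mem measurableSet_Ioi] with t ht
    have : (0:ℝ) < t := ht
    positivity
  rw [← ofReal_integral_eq_lintegral_ofReal hint hnn, hval]
  congr 1
  rw [one_div, ← Real.rpow_neg_one x, ← Real.rpow_mul hx.le, neg_one_mul]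

/-- The key monotonicity in lintegral form at a fixed `t ≥ 0`. -/
lemma lintegral_exp_le {Ω : Type*} [MeasurableSpace Ω] (μ : Measure Ω)
    [IsProbabilityMeasure μ]
    (X Y : Ω → ℝ) (hX : Measurable X) (hY : Measurable Y)
    (hXpos : ∀ o, 0 < X o) (hYpos : ∀ o, 0 < Y o)
    (hLt : ∀ lam : ℝ, 0 ≤ lam →
      ∫ o, Real.exp (-lam * Y o) ∂μ ≤ ∫ o, Real.exp (-lam * X o) ∂μ)
    {t : ℝ} (ht : 0 ≤ t) :
    ∫⁻ o, ENNReal.ofReal (Real.exp (-(Y o * t))) ∂μ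
      ≤ ∫⁻ o, ENNReal.ofReal (Real.exp (-(X o * t))) ∂μ := by
  have hintg : ∀ (Z : Ω → ℝ), Measurable Z → (∀ o, 0 < Z o) →
      Integrable (fun o => Real.exp (-(Z o * t))) μ := by
    intro Z hZ hZpos
    refine Integrable.mono' (integrable_const 1)
      ((hZ.mul_const t).neg.exp.aestronglyMeasurable) ?_
    filter_upwards with o
    rw [Real.norm_eq_abs, abs_of_pos (Real.exp_pos _)]
    exact Real.exp_le_one_iff.2 (by nlinarith [(hZpos o).le])
  have h1 := hintg X hX hXpos
  have h2 := hintg Y hY hYpos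
  rw [← ofReal_integral_eq_lintegral_ofReal h1
      (Filter.Eventually.of_forall fun o => (Real.exp_pos _).le),
    ← ofReal_integral_eq_lintegral_ofReal h2
      (Filter.Eventually.of_forall fun o => (Real.exp_pos _).le)]
  apply ENNReal.ofReal_le_ofReal
  have h := hLt t ht
  simp only [neg_mul] at h
  simpa only [mul_comm] using h

lemma lintegral_rpow_eq {Ω : Type*} [MeasurableSpace Ω] (μ : Measure Ω)
    [IsProbabilityMeasure μ] (Z : Ω → ℝ) (hZ : Measurable Z) (hZpos : ∀ o, 0 < Z o)
    {lam : ℝ} (hlam : 0 < lam) :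
    (∫⁻ o, ENNReal.ofReal (Z o ^ (-lam)) ∂μ) * ENNReal.ofReal (Real.Gamma lam)
      = ∫⁻ t in Ioi (0:ℝ), ENNReal.ofReal (t ^ (lam - 1))
          * ∫⁻ o, ENNReal.ofReal (Real.exp (-(Z o * t))) ∂μ := by
  rw [← lintegral_mul_const _ (hZ.pow_const (-lam)).ennreal_ofReal]
  have step1 : ∀ o, ENNReal.ofReal (Z o ^ (-lam)) * ENNReal.ofReal (Real.Gamma lam)
      = ∫⁻ t in Ioi (0:ℝ), ENNReal.ofReal (t ^ (lam - 1) * Real.exp (-(Z o * t))) := by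
    intro o
    rw [← ENNReal.ofReal_mul (Real.rpow_nonneg (hZpos o).le _)]
    exact ofReal_rpow_neg_eq_lintegral (hZpos o) hlam
  simp_rw [step1]
  rw [lintegral_lintegral_swap]
  · refine setLIntegral_congr_fun measurableSet_Ioi ?_
    intro t ht
    dsimp only
    have ht' : 0 ≤ t ^ (lam - 1) := Real.rpow_nonneg (le_of_lt ht) _
    rw [← lintegral_const_mul (f := fun o => ENNReal.ofReal (Real.exp (-(Z o * t)))) _ ((hZ.mul_const t).neg.exp.ennreal_ofReal)]
    congr 1 with o
    rw [← ENNReal.ofReal_mul ht']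
  · apply Measurable.aemeasurable
    apply Measurable.ennreal_ofReal
    apply Measurable.mul
    · exact (measurable_snd.pow_const (lam - 1))
    · exact ((hZ.comp measurable_fst).mul measurable_snd).neg.exp

/-- If `X` and `Y` are strictly positive random variables with
`X ≤_Lt Y` (i.e. `𝔼[exp(−λX)] ≥ 𝔼[exp(−λY)]` for all `λ ≥ 0`), then
`log X ≤_Lt log Y`; equivalently `𝔼[X^{−λ}] ≥ 𝔼[Y^{−λ}]` for every `λ ≥ 0`
(the expectations of these nonnegative quantities being taken in `[0,∞]`). -/
theorem log_laplaceOrder_of_laplaceOrder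
    {Ω : Type*} [MeasurableSpace Ω] (μ : Measure Ω) [IsProbabilityMeasure μ]
    (X Y : Ω → ℝ) (hX : Measurable X) (hY : Measurable Y)
    (hXpos : ∀ o, 0 < X o) (hYpos : ∀ o, 0 < Y o)
    (hLt : ∀ lam : ℝ, 0 ≤ lam →
      ∫ o, Real.exp (-lam * Y o) ∂μ ≤ ∫ o, Real.exp (-lam * X o) ∂μ) :
    ∀ lam : ℝ, 0 ≤ lam →
      (∫⁻ o, ENNReal.ofReal (Real.exp (-lam * Real.log (Y o))) ∂μ
          ≤ ∫⁻ o, ENNReal.ofReal (Real.exp (-lam * Real.log (X o))) ∂μ)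
      ∧ (∫⁻ o, ENNReal.ofReal (Y o ^ (-lam)) ∂μ
          ≤ ∫⁻ o, ENNReal.ofReal (X o ^ (-lam)) ∂μ) := by
  intro lam hlam
  have hexp_eq : ∀ (Z : Ω → ℝ), (∀ o, 0 < Z o) → ∀ o,
      Real.exp (-lam * Real.log (Z o)) = Z o ^ (-lam) := by
    intro Z hZpos o
    rw [Real.rpow_def_of_pos (hZpos o), mul_comm]
  have main : ∫⁻ o, ENNReal.ofReal (Y o ^ (-lam)) ∂μ
      ≤ ∫⁻ o, ENNReal.ofReal (X o ^ (-lam)) ∂μ := by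
    rcases eq_or_lt_of_le hlam with h0 | hpos
    · simp [← h0]
    · have hG : 0 < Real.Gamma lam := Real.Gamma_pos_of_pos hpos
      have hkey : (∫⁻ o, ENNReal.ofReal (Y o ^ (-lam)) ∂μ) * ENNReal.ofReal (Real.Gamma lam)
          ≤ (∫⁻ o, ENNReal.ofReal (X o ^ (-lam)) ∂μ) * ENNReal.ofReal (Real.Gamma lam) := by
        rw [lintegral_rpow_eq μ X hX hXpos hpos, lintegral_rpow_eq μ Y hY hYpos hpos]
        refine lintegral_mono_ae ?_
        filter_upwards [ae_restrict_mem measurableSet_Ioi] with t ht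
        exact mul_le_mul_right
          (lintegral_exp_le μ X Y hX hY hXpos hYpos hLt (le_of_lt ht)) _
      exact (ENNReal.mul_le_mul_iff_left (by simp [hG]) ENNReal.ofReal_ne_top).1 hkey
  constructor
  · simpa only [hexp_eq X hXpos, hexp_eq Y hYpos] using main
  · exact main
end
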